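/- For every partition λ, there is exactly one partition ν with all column lengths even such that λ ≺ ν, and exactly one partition μ with all column lengths even such that μ ≺ λ; moreover |ν/λ| = |λ/μ| = the number of odd columns of λ. Equivalently, π_{P_e'} ∘ U_x = π_{P_e'} ∘ D_x. -/

import Mathlib

/-- A partition, encoded as a weakly decreasing eventually-zero sequence of
natural numbers (`part i` is the `(i+1)`-st part). -/
structure Ptn where
  part : ℕ → ℕ
  anti : Antitone part
  fin : ∃ N, ∀ n, N ≤ n → part n = 0

namespace Ptn

/-- The number of cells of the skew diagram `lam / mu`. -/
noncomputable def skewSize (lam mu : Ptn) : ℕ := ∑ᶠ i, (lam.part i - mu.part i)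

/-- `HStrip mu lam` means `mu ≺ lam`, i.e. `mu ⊆ lam` and the skew diagram
`lam/mu` is a horizontal strip (at most one cell in each column). -/
def HStrip (mu lam : Ptn) : Prop :=
  (∀ i, mu.part i ≤ lam.part i) ∧ ∀ i, lam.part (i + 1) ≤ mu.part i

/-- `VStrip mu lam` means `mu ≺' lam`, i.e. `mu ⊆ lam` and the skew diagram
`lam/mu` is a vertical strip (at most one cell in each row). -/
def VStrip (mu lam : Ptn) : Prop :=
  (∀ i, mu.part i ≤ lam.part i) ∧ ∀ i, lam.part i ≤ mu.part i + 1

/-- The union `lam ∪ rho` of two Young diagrams. -/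
def union (a b : Ptn) : Ptn where
  part i := max (a.part i) (b.part i)
  anti := fun _ _ h => max_le_max (a.anti h) (b.anti h)
  fin := by
    obtain ⟨N, hN⟩ := a.fin
    obtain ⟨M, hM⟩ := b.fin
    exact ⟨max N M, fun n hn => by
      show max (a.part n) (b.part n) = 0
      rw [hN n (le_trans (le_max_left _ _) hn), hM n (le_trans (le_max_right _ _) hn)]
      rfl⟩

/-- The intersection `lam ∩ rho` of two Young diagrams. -/
def inter (a b : Ptn) : Ptn where
  part i := min (a.part i) (b.part i)
  anti := fun _ _ h => min_le_min (a.anti h) (b.anti h)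
  fin := by
    obtain ⟨N, hN⟩ := a.fin
    exact ⟨N, fun n hn => by
      show min (a.part n) (b.part n) = 0
      simp [hN n hn]⟩

/-- The empty partition. -/
def empty : Ptn := ⟨fun _ => 0, fun _ _ _ => le_refl 0, ⟨0, fun _ _ => rfl⟩⟩

/-- The conjugate partition: `(conj lam).part j` is the length of column `j`. -/
noncomputable def conj (lam : Ptn) : Ptn where
  part j := Set.ncard {i | j < lam.part i}
  anti := by
    intro j k h
    apply Set.ncard_le_ncard
    · intro i hi
      exact lt_of_le_of_lt h hi
    · obtain ⟨N, hN⟩ := lam.fin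
      apply Set.Finite.subset (Set.finite_Iio N)
      intro i hi
      by_contra hc
      have hNi : N ≤ i := not_lt.mp (fun h => hc (Set.mem_Iio.mpr h))
      rw [Set.mem_setOf_eq, hN i hNi] at hi
      exact Nat.not_lt_zero j hi
  fin := by
    refine ⟨lam.part 0, fun n hn => ?_⟩
    have h : {i | n < lam.part i} = (∅ : Set ℕ) := by
      ext i
      simp only [Set.mem_setOf_eq, Set.mem_empty_iff_false, iff_false, not_lt]
      exact le_trans (lam.anti (Nat.zero_le i)) hn
    show Set.ncard {i | n < lam.part i} = 0
    rw [h, Set.ncard_empty]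

end Ptn

namespace Ptn

/-- A partition has all columns of even length iff its conjugate has all parts even. -/
def EvenCols (lam : Ptn) : Prop := ∀ j, Even ((conj lam).part j)

/-- The number of odd-length columns of a partition. -/
noncomputable def oddColCount (lam : Ptn) : ℕ := Set.ncard {j | Odd ((conj lam).part j)}

end Ptn

namespace Ptn

theorem ext' {a b : Ptn} (h : a.part = b.part) : a = b := by
  cases a; cases b; cases h; rfl

theorem conj_part_eq (lam : Ptn) (j n : ℕ) (h1 : ∀ i, i < n → j < lam.part i)
    (h2 : lam.part n ≤ j) : (conj lam).part j = n := by
  show Set.ncard {i | j < lam.part i} = n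
  have hset : {i | j < lam.part i} = Set.Iio n := by
    ext i
    simp only [Set.mem_setOf_eq, Set.mem_Iio]
    constructor
    · intro hi
      by_contra hc
      exact absurd (le_trans (lam.anti (not_lt.mp hc)) h2) (not_le.mpr hi)
    · exact h1 i
  rw [hset, ← Finset.coe_range, Set.ncard_coe_finset, Finset.card_range]

theorem odd_conj_iff (lam : Ptn) (j : ℕ) :
    Odd ((conj lam).part j) ↔ ∃ k, lam.part (2*k+1) ≤ j ∧ j < lam.part (2*k) := by
  obtain ⟨N, hN⟩ := lam.fin
  have hex : ∃ i, lam.part i ≤ j := ⟨N, by rw [hN N le_rfl]; exact Nat.zero_le j⟩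
  have hcol : (conj lam).part j = Nat.find hex :=
    conj_part_eq lam j _ (fun i hi => not_le.mp (Nat.find_min hex hi)) (Nat.find_spec hex)
  rw [hcol]
  constructor
  · intro hodd
    obtain ⟨k, hk⟩ : ∃ k, Nat.find hex = 2*k+1 := by
      rcases hodd with ⟨k, hk⟩; exact ⟨k, by omega⟩
    refine ⟨k, ?_, ?_⟩
    · have := Nat.find_spec hex; rwa [hk] at this
    · exact not_le.mp (Nat.find_min hex (show 2*k < Nat.find hex by omega))
  · rintro ⟨k, h1, h2⟩
    have hle : Nat.find hex ≤ 2*k+1 := Nat.find_min' hex h1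
    have hgt : 2*k < Nat.find hex := by
      by_contra hc
      push_neg at hc
      exact absurd (le_trans (lam.anti hc) (Nat.find_spec hex)) (not_le.mpr h2)
    exact ⟨k, by omega⟩

theorem evenCols_iff (lam : Ptn) :
    EvenCols lam ↔ ∀ k, lam.part (2*k) = lam.part (2*k+1) := by
  constructor
  · intro h k
    by_contra hc
    have hlt : lam.part (2*k+1) < lam.part (2*k) :=
      lt_of_le_of_ne (lam.anti (by omega)) fun e => hc e.symm
    have : Odd ((conj lam).part (lam.part (2*k+1))) :=
      (odd_conj_iff lam _).mpr ⟨k, le_rfl, hlt⟩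
    exact (Nat.not_odd_iff_even.mpr (h _)) this
  · intro h j
    rw [← Nat.not_odd_iff_even, odd_conj_iff]
    rintro ⟨k, h1, h2⟩
    rw [h k] at h2
    exact absurd h1 (not_le.mpr h2)

/-- λ with a cell added to each odd column. -/
noncomputable def nuOf (lam : Ptn) : Ptn where
  part i := lam.part (2 * (i / 2))
  anti := fun i j h => lam.anti (by omega)
  fin := by
    obtain ⟨N, hN⟩ := lam.fin
    exact ⟨N + 1, fun n hn => hN _ (by omega)⟩

/-- λ with a cell removed from each odd column. -/
noncomputable def muOf (lam : Ptn) : Ptn where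
  part i := lam.part (2 * (i / 2) + 1)
  anti := fun i j h => lam.anti (by omega)
  fin := by
    obtain ⟨N, hN⟩ := lam.fin
    exact ⟨N, fun n hn => hN _ (by omega)⟩

theorem nuOf_even (lam : Ptn) : EvenCols (nuOf lam) := by
  rw [evenCols_iff]
  intro k
  show lam.part (2 * (2*k / 2)) = lam.part (2 * ((2*k+1) / 2))
  congr 1
  omega

theorem muOf_even (lam : Ptn) : EvenCols (muOf lam) := by
  rw [evenCols_iff]
  intro k
  show lam.part (2 * (2*k / 2) + 1) = lam.part (2 * ((2*k+1) / 2) + 1)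
  congr 1
  omega

theorem hstrip_nuOf (lam : Ptn) : HStrip lam (nuOf lam) := by
  constructor
  · intro i; exact lam.anti (show 2 * (i / 2) ≤ i by omega)
  · intro i; exact lam.anti (show i ≤ 2 * ((i+1) / 2) by omega)

theorem hstrip_muOf (lam : Ptn) : HStrip (muOf lam) lam := by
  constructor
  · intro i; exact lam.anti (show i ≤ 2 * (i / 2) + 1 by omega)
  · intro i; exact lam.anti (show 2 * (i / 2) + 1 ≤ i + 1 by omega)

theorem nu_unique {lam nu : Ptn} (hE : EvenCols nu) (hS : HStrip lam nu) :
    ∀ i, nu.part i = lam.part (2 * (i / 2)) := by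
  have hE' := (evenCols_iff nu).mp hE
  intro i
  obtain ⟨k, hk⟩ : ∃ k, i = 2*k ∨ i = 2*k+1 := ⟨i / 2, by omega⟩
  have e1 := hE' k
  have e2 := hS.1 (2*k)
  have e3 := hS.2 (2*k)
  have h2 : 2 * (i / 2) = 2 * k := by omega
  rw [h2]
  rcases hk with h | h <;> subst h <;> omega

theorem mu_unique {lam mu : Ptn} (hE : EvenCols mu) (hS : HStrip mu lam) :
    ∀ i, mu.part i = lam.part (2 * (i / 2) + 1) := by
  have hE' := (evenCols_iff mu).mp hE
  intro i
  obtain ⟨k, hk⟩ : ∃ k, i = 2*k ∨ i = 2*k+1 := ⟨i / 2, by omega⟩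
  have e1 := hE' k
  have e2 := hS.1 (2*k+1)
  have e3 := hS.2 (2*k)
  have h2 : 2 * (i / 2) + 1 = 2 * k + 1 := by omega
  rw [h2]
  rcases hk with h | h <;> subst h <;> omega

theorem sum_range_two_mul (f : ℕ → ℕ) (M : ℕ) :
    ∑ i ∈ Finset.range (2*M), f i = ∑ k ∈ Finset.range M, (f (2*k) + f (2*k+1)) := by
  induction M with
  | zero => simp
  | succ m ih =>
    rw [Finset.sum_range_succ, ← ih, show 2*(m+1) = 2*m+1+1 by ring,
      Finset.sum_range_succ, Finset.sum_range_succ]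
    ring

end Ptn

open Ptn in
/-- For every partition `lam`, there is exactly one partition `ν` with all
column lengths even such that `lam ≺ ν`, and exactly one partition `μ` with
all column lengths even such that `μ ≺ lam`; moreover
`|ν/lam| = |lam/μ| =` the number of odd columns of `lam`. -/
theorem projection_even_column_partitions (lam : Ptn) :
    (∃! ν : Ptn, EvenCols ν ∧ HStrip lam ν) ∧
    (∃! mu : Ptn, EvenCols mu ∧ HStrip mu lam) ∧
    (∀ ν mu : Ptn, EvenCols ν → HStrip lam ν → EvenCols mu → HStrip mu lam →
      skewSize ν lam = oddColCount lam ∧ skewSize lam mu = oddColCount lam) := by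
  obtain ⟨N, hN⟩ := lam.fin
  refine ⟨⟨nuOf lam, ⟨nuOf_even lam, hstrip_nuOf lam⟩,
      fun nu ⟨hE, hS⟩ => ext' (funext (nu_unique hE hS))⟩,
    ⟨muOf lam, ⟨muOf_even lam, hstrip_muOf lam⟩,
      fun mu ⟨hE, hS⟩ => ext' (funext (mu_unique hE hS))⟩, ?_⟩
  intro nu mu hEnu hSnu hEmu hSmu
  have hnu := nu_unique hEnu hSnu
  have hmu := mu_unique hEmu hSmu
  set S := ∑ k ∈ Finset.range N, (lam.part (2*k) - lam.part (2*k+1)) with hSdef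
  have hskew1 : skewSize nu lam = S := by
    have hsupp : Function.support (fun i => nu.part i - lam.part i)
        ⊆ ↑(Finset.range (2*N)) := by
      intro i hi
      simp only [Function.mem_support] at hi
      simp only [Finset.coe_range, Set.mem_Iio]
      by_contra hc
      push_neg at hc
      apply hi
      rw [hnu i, hN _ (by omega), hN _ (by omega)]
      omega
    rw [skewSize, finsum_eq_sum_of_support_subset _ hsupp, sum_range_two_mul, hSdef]
    apply Finset.sum_congr rfl
    intro k _
    rw [hnu (2*k), hnu (2*k+1), show 2 * (2*k / 2) = 2*k by omega,
      show 2 * ((2*k+1) / 2) = 2*k by omega]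
    omega
  have hskew2 : skewSize lam mu = S := by
    have hsupp : Function.support (fun i => lam.part i - mu.part i)
        ⊆ ↑(Finset.range (2*N)) := by
      intro i hi
      simp only [Function.mem_support] at hi
      simp only [Finset.coe_range, Set.mem_Iio]
      by_contra hc
      push_neg at hc
      apply hi
      rw [hN _ (by omega)]
      omega
    rw [skewSize, finsum_eq_sum_of_support_subset _ hsupp, sum_range_two_mul, hSdef]
    apply Finset.sum_congr rfl
    intro k _
    rw [hmu (2*k), hmu (2*k+1), show 2 * (2*k / 2) + 1 = 2*k+1 by omega,
      show 2 * ((2*k+1) / 2) + 1 = 2*k+1 by omega]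
    omega
  have hodd : oddColCount lam = S := by
    have hset : {j | Odd ((conj lam).part j)} =
        ↑((Finset.range N).biUnion fun k =>
          Finset.Ico (lam.part (2*k+1)) (lam.part (2*k))) := by
      ext j
      simp only [Set.mem_setOf_eq, Finset.mem_coe, Finset.mem_biUnion,
        Finset.mem_range, Finset.mem_Ico, odd_conj_iff]
      constructor
      · rintro ⟨k, h1, h2⟩
        refine ⟨k, ?_, h1, h2⟩
        by_contra hc
        push_neg at hc
        rw [hN (2*k) (by omega)] at h2
        omega
      · rintro ⟨k, _, h1, h2⟩; exact ⟨k, h1, h2⟩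
    rw [oddColCount, hset, Set.ncard_coe_finset, Finset.card_biUnion, hSdef]
    · apply Finset.sum_congr rfl; intro k _; rw [Nat.card_Ico]
    · intro k _ l _ hkl
      have key : ∀ a b : ℕ, a < b →
          Disjoint (Finset.Ico (lam.part (2*a+1)) (lam.part (2*a)))
            (Finset.Ico (lam.part (2*b+1)) (lam.part (2*b))) := by
        intro a b hab
        have hle : lam.part (2*b) ≤ lam.part (2*a+1) := lam.anti (by omega)
        rw [Finset.disjoint_left]
        intro x hx hx'
        simp only [Finset.mem_Ico] at hx hx'
        omega
      rcases lt_or_gt_of_ne hkl with h | h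
      · exact key k l h
      · exact (key l k h).symm
  exact ⟨hskew1.trans hodd.symm, hskew2.trans hodd.symm⟩
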